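/- Let A be a finite abelian group, let p be a prime dividing |A|, and let B be an infinite finitely generated abelian group. Then A ≀ B contains a subgroup isomorphic to (ℤ/pℤ) ≀ ℤ of the form C ≀ Z₀, where C ≤ A is a subgroup of order p contained in a cyclic direct summand of A and Z₀ ≤ B is an infinite cyclic retract of B, which is conjugacy embedded in A ≀ B; moreover Conj_{(ℤ/pℤ)≀ℤ}(n) ≼ Conj_{A≀B}(n). -/

import Mathlib

open Pointwise

namespace WreathDepth

def base (A B : Type*) [Group A] [Group B] : Subgroup (B → A) where
  carrier := {f | (Function.mulSupport f).Finite}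
  one_mem' := by
    simp [Function.mulSupport_one]
  mul_mem' := by
    intro f g hf hg
    exact (Set.Finite.union hf hg).subset (Function.mulSupport_mul f g)
  inv_mem' := by
    intro f hf
    simpa [Function.mulSupport_inv] using hf

lemma mem_base_iff {A B : Type*} [Group A] [Group B] (f : B → A) :
    f ∈ base A B ↔ (Function.mulSupport f).Finite := Iff.rfl

def shiftEquiv {A B : Type*} [Group A] [Group B] (b : B) : base A B ≃* base A B where
  toFun f := ⟨fun x => (f : B → A) (b⁻¹ * x), by
    have h : (Function.mulSupport fun x => (f : B → A) (b⁻¹ * x)) =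
        (fun x => b⁻¹ * x) ⁻¹' Function.mulSupport (f : B → A) := rfl
    rw [mem_base_iff, h]
    exact Set.Finite.preimage ((mul_right_injective b⁻¹).injOn) f.2⟩
  invFun f := ⟨fun x => (f : B → A) (b * x), by
    have h : (Function.mulSupport fun x => (f : B → A) (b * x)) =
        (fun x => b * x) ⁻¹' Function.mulSupport (f : B → A) := rfl
    rw [mem_base_iff, h]
    exact Set.Finite.preimage ((mul_right_injective b).injOn) f.2⟩
  left_inv f := by
    ext x
    simp
  right_inv f := by
    ext x
    simp
  map_mul' f g := rfl

def shiftHom (A B : Type*) [Group A] [Group B] : B →* MulAut (base A B) where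
  toFun := shiftEquiv
  map_one' := by
    apply MulEquiv.ext
    intro f
    apply Subtype.ext
    funext x
    show (f : B → A) ((1 : B)⁻¹ * x) = (f : B → A) x
    simp
  map_mul' b₁ b₂ := by
    apply MulEquiv.ext
    intro f
    apply Subtype.ext
    funext x
    show (f : B → A) ((b₁ * b₂)⁻¹ * x) = (f : B → A) (b₂⁻¹ * (b₁⁻¹ * x))
    rw [mul_inv_rev, mul_assoc]

/-- The restricted wreath product `A ≀ B`. -/
abbrev Wr (A B : Type*) [Group A] [Group B] : Type _ := base A B ⋊[shiftHom A B] B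

lemma wr_mul_left_apply {A B : Type*} [Group A] [Group B] (x y : Wr A B) (z : B) :
    ((x * y).left : B → A) z = (x.left : B → A) z * (y.left : B → A) (x.right⁻¹ * z) := rfl

lemma wr_inv_left_apply {A B : Type*} [Group A] [Group B] (x : Wr A B) (z : B) :
    ((x⁻¹).left : B → A) z = ((x.left : B → A) (x.right⁻¹⁻¹ * z))⁻¹ := rfl

/-- For subgroups `RA ≤ A` and `RB ≤ B`, the subgroup `RA ≀ RB` of `A ≀ B`,
consisting of elements whose acting part lies in `RB` and whose base part is
supported in `RB` with values in `RA`. -/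
def wrSubgroup {A B : Type*} [Group A] [Group B] (RA : Subgroup A) (RB : Subgroup B) :
    Subgroup (Wr A B) where
  carrier := {x | x.right ∈ RB ∧ (∀ y : B, (x.left : B → A) y ∈ RA) ∧
      ∀ y : B, y ∉ RB → (x.left : B → A) y = 1}
  one_mem' := by
    refine ⟨by simpa using one_mem RB, fun y => ?_, fun y _ => ?_⟩
    · simpa using one_mem RA
    · simp
  mul_mem' := by
    rintro x y ⟨hxr, hxA, hxs⟩ ⟨hyr, hyA, hys⟩
    refine ⟨by simpa using mul_mem hxr hyr, ?_, ?_⟩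
    · intro z
      rw [wr_mul_left_apply]
      exact mul_mem (hxA z) (hyA _)
    · intro z hz
      rw [wr_mul_left_apply, hxs z hz, one_mul]
      apply hys
      intro hmem
      exact hz (by simpa using mul_mem hxr hmem)
  inv_mem' := by
    rintro x ⟨hxr, hxA, hxs⟩
    refine ⟨by simpa using inv_mem hxr, ?_, ?_⟩
    · intro z
      rw [wr_inv_left_apply]
      exact inv_mem (hxA _)
    · intro z hz
      rw [wr_inv_left_apply, hxs, inv_one]
      intro hmem
      apply hz
      have : x.right⁻¹ * (x.right⁻¹⁻¹ * z) ∈ RB := mul_mem (inv_mem hxr) hmem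
      simpa using this

/-- The ball of radius `n` in `G` with respect to the generating set `S`:
products of at most `n` elements of `S ∪ S⁻¹`. -/
def ball (G : Type*) [Group G] (S : Set G) (n : ℕ) : Set G :=
  {g | ∃ w : List G, (∀ x ∈ w, x ∈ S ∪ S⁻¹) ∧ w.length ≤ n ∧ w.prod = g}

/-- `S` is a finite generating set of `G`. -/
def GeneratingSet {G : Type*} [Group G] (S : Set G) : Prop :=
  S.Finite ∧ Subgroup.closure S = ⊤

/-- The conjugacy depth of a pair of elements: the minimal order of a finite
quotient of `G` in which the images of `x` and `y` are not conjugate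
(`⊤` if there is no such quotient). -/
noncomputable def CD (G : Type*) [Group G] (x y : G) : ℕ∞ :=
  sInf {c : ℕ∞ | ∃ (Q : Type) (_ : Group Q) (_ : Finite Q) (π : G →* Q),
    Function.Surjective π ∧ ¬ IsConj (π x) (π y) ∧ c = (Nat.card Q : ℕ∞)}

/-- The conjugacy depth function of `G` with respect to a generating set `S`. -/
noncomputable def conjDepthFn (G : Type*) [Group G] (S : Set G) (n : ℕ) : ℕ∞ :=
  ⨆ (x : G) (_ : x ∈ ball G S n) (y : G) (_ : y ∈ ball G S n) (_ : ¬ IsConj x y),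
    CD G x y

/-- `u ≼ v` : there is `C ∈ ℕ` with `u n ≤ C * v (C * n)` for all `n`. -/
def Preceq (u v : ℕ → ℕ∞) : Prop :=
  ∃ C : ℕ, ∀ n : ℕ, u n ≤ (C : ℕ∞) * v (C * n)

/-- `u ≈ v` : `u ≼ v` and `v ≼ u`. -/
def AsympEquiv (u v : ℕ → ℕ∞) : Prop := Preceq u v ∧ Preceq v u

/-- `G` is conjugacy separable. -/
def ConjugacySeparable (G : Type*) [Group G] : Prop :=
  ∀ x y : G, ¬ IsConj x y →
    ∃ (Q : Type) (_ : Group Q) (_ : Finite Q) (π : G →* Q),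
      Function.Surjective π ∧ ¬ IsConj (π x) (π y)

/-- Every cyclic subgroup of `G` is separable. -/
def CyclicSubgroupSeparable (G : Type*) [Group G] : Prop :=
  ∀ x g : G, g ∉ Subgroup.zpowers x →
    ∃ (Q : Type) (_ : Group Q) (_ : Finite Q) (π : G →* Q),
      Function.Surjective π ∧ π g ∉ Subgroup.map π (Subgroup.zpowers x)

/-- `H` is a retract of `G`: there is an endomorphism of `G` with image in `H`
restricting to the identity on `H` (equivalently, a surjection `G → H` that is
the identity on `H`). -/
def IsRetractSubgroup {G : Type*} [Group G] (H : Subgroup G) : Prop :=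
  ∃ ρ : G →* G, (∀ x : G, ρ x ∈ H) ∧ ∀ h ∈ H, ρ h = h

/-- The finitely generated abelian group `B` has torsion-free rank `k`, i.e.
`B ≅ ℤ^k ⊕ T` with `T` finite. -/
def HasTorsionFreeRank (B : Type*) [CommGroup B] (k : ℕ) : Prop :=
  ∃ (T : Type) (_ : CommGroup T) (_ : Finite T),
    Nonempty (B ≃* Multiplicative (Fin k → ℤ) × T)

/-- An element `f b` of `A ≀ B` is reduced if the elements of the support of `f`
lie in pairwise distinct cosets of `⟨b⟩`. -/
def Reduced {A B : Type*} [Group A] [Group B] (f : base A B) (b : B) : Prop :=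
  ∀ x ∈ Function.mulSupport (f : B → A), ∀ y ∈ Function.mulSupport (f : B → A),
    x⁻¹ * y ∈ Subgroup.zpowers b → x = y


section FinprodHelpers

variable {M : Type*} [CommMonoid M]

lemma finprod_mem_subgroup {ι : Type*} {A : Type*} [CommGroup A] (f : ι → A) (C : Subgroup A)
    (h : ∀ i, f i ∈ C) : ∏ᶠ i, f i ∈ C := by
  classical
  by_cases hf : (Function.mulSupport f).Finite
  · rw [finprod_eq_prod f hf]
    exact Subgroup.prod_mem _ fun i _ => h i
  · rw [finprod_of_infinite_mulSupport hf]
    exact one_mem _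

lemma finprod_mem_of_mulSupport_subset' {ι : Type*} (f : ι → M) {S : Set ι}
    (h : Function.mulSupport f ⊆ S) : ∏ᶠ i ∈ S, f i = ∏ᶠ i, f i := by
  rw [← finprod_mem_univ f, ← finprod_mem_inter_mulSupport f S,
    ← finprod_mem_inter_mulSupport f Set.univ, Set.univ_inter,
    Set.inter_eq_self_of_subset_right h]

lemma finprod_nat_peel (F : ℕ → M) (hF : (Function.mulSupport F).Finite) :
    ∏ᶠ k, F k = F 0 * ∏ᶠ k, F (k + 1) := by
  have hu : (Set.univ : Set ℕ) = {0} ∪ Set.range Nat.succ := by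
    ext k; cases k <;> simp [Nat.succ_eq_add_one]
  have hdis : Disjoint ({0} : Set ℕ) (Set.range Nat.succ) := by
    simp [Set.disjoint_left]
  rw [← finprod_mem_univ F, hu,
    finprod_mem_union' hdis ((Set.finite_singleton 0).inter_of_left _) (hF.inter_of_right _),
    finprod_mem_singleton, finprod_mem_range Nat.succ_injective]

end FinprodHelpers

section Sigma

variable {A B : Type*} [CommGroup A] [CommGroup B]

/-- Product of the values of `f` over the coset `z⟨b⟩`. -/
noncomputable def sig (b : B) (f : B → A) (z : B) : A := ∏ᶠ k : ℤ, f (z * b ^ k)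

lemma sig_support_finite {b : B} (hb : ¬ IsOfFinOrder b) {f : B → A}
    (hf : (Function.mulSupport f).Finite) (z : B) :
    (Function.mulSupport fun k : ℤ => f (z * b ^ k)).Finite := by
  have hinj : Function.Injective fun k : ℤ => z * b ^ k :=
    (mul_right_injective z).comp (injective_zpow_iff_not_isOfFinOrder.mpr hb)
  have h : (Function.mulSupport fun k : ℤ => f (z * b ^ k)) =
      (fun k : ℤ => z * b ^ k) ⁻¹' Function.mulSupport f := rfl
  rw [h]
  exact hf.preimage hinj.injOn

lemma sig_mul {b : B} (hb : ¬ IsOfFinOrder b) {f g : B → A}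
    (hf : (Function.mulSupport f).Finite) (hg : (Function.mulSupport g).Finite) (z : B) :
    sig b (fun w => f w * g w) z = sig b f z * sig b g z :=
  finprod_mul_distrib (sig_support_finite hb hf z) (sig_support_finite hb hg z)

lemma sig_inv (b : B) (f : B → A) (z : B) :
    sig b (fun w => (f w)⁻¹) z = (sig b f z)⁻¹ :=
  finprod_inv_distrib _

lemma sig_shift (b : B) (f : B → A) (c z : B) :
    sig b (fun w => f (c * w)) z = sig b f (c * z) := by
  unfold sig
  exact finprod_congr fun k => by rw [mul_assoc]

lemma sig_comp_shift_b (b : B) (f : B → A) (z : B) :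
    sig b (fun w => f (b⁻¹ * w)) z = sig b f z := by
  unfold sig
  have h1 : ∀ k : ℤ, f (b⁻¹ * (z * b ^ k)) = f (z * b ^ (k - 1)) := by
    intro k
    congr 1
    rw [zpow_sub_one, mul_comm b⁻¹ (z * b ^ k), mul_assoc]
  rw [finprod_congr h1]
  exact finprod_eq_of_bijective (fun k => k - 1) (Equiv.subRight (1 : ℤ)).bijective
    fun k => rfl

lemma sig_coboundary {b : B} (hb : ¬ IsOfFinOrder b) {h : B → A}
    (hh : (Function.mulSupport h).Finite) (z : B) :
    sig b (fun w => h w * (h (b⁻¹ * w))⁻¹) z = 1 := by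
  have hh2 : (Function.mulSupport fun w => (h (b⁻¹ * w))⁻¹).Finite := by
    have heq : (Function.mulSupport fun w => (h (b⁻¹ * w))⁻¹) =
        (fun w => b⁻¹ * w) ⁻¹' Function.mulSupport h := by
      ext w; simp [Function.mulSupport]
    rw [heq]
    exact hh.preimage (mul_right_injective _).injOn
  rw [sig_mul hb hh hh2 z, sig_inv, sig_comp_shift_b, mul_inv_cancel]

lemma sig_ne_one_exists {b : B} {f : B → A} {z : B} (h : sig b f z ≠ 1) :
    ∃ k : ℤ, f (z * b ^ k) ≠ 1 := by
  by_contra hc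
  push_neg at hc
  exact h (finprod_eq_one_of_forall_eq_one hc)

lemma exists_coboundary {b₀ : B} (hb₀ : ¬ IsOfFinOrder b₀) {n : ℤ} (hn : n ≠ 0)
    {C : Subgroup A} {u : B → A} (hufin : (Function.mulSupport u).Finite)
    (huC : ∀ z, u z ∈ C) (husupp : ∀ z, u z ≠ 1 → z ∈ Subgroup.zpowers b₀)
    (hsig : ∀ z, sig (b₀ ^ n) u z = 1) :
    ∃ h : B → A, (Function.mulSupport h).Finite ∧ (∀ z, h z ∈ C) ∧
      (∀ z, z ∉ Subgroup.zpowers b₀ → h z = 1) ∧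
      ∀ z, u z = h z * (h ((b₀ ^ n)⁻¹ * z))⁻¹ := by
  classical
  have hinj : Function.Injective fun j : ℤ => b₀ ^ j :=
    injective_zpow_iff_not_isOfFinOrder.mpr hb₀
  set v : ℤ → A := fun j => u (b₀ ^ j) with hv
  have hvfin : (Function.mulSupport v).Finite := by
    have h : Function.mulSupport v = (fun j : ℤ => b₀ ^ j) ⁻¹' Function.mulSupport u := rfl
    rw [h]; exact hufin.preimage hinj.injOn
  have haff : ∀ j : ℤ, Function.Injective fun k : ℤ => j + n * k := by
    intro j k₁ k₂ h
    simp only [add_right_inj] at h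
    exact mul_left_cancel₀ hn h
  have hkfinZ : ∀ j : ℤ, (Function.mulSupport fun k : ℤ => v (j + n * k)).Finite := by
    intro j
    have h : (Function.mulSupport fun k : ℤ => v (j + n * k)) =
        (fun k : ℤ => j + n * k) ⁻¹' Function.mulSupport v := rfl
    rw [h]; exact hvfin.preimage (haff j).injOn
  have hkfinN : ∀ j : ℤ, (Function.mulSupport fun k : ℕ => v (j + n * ((k : ℤ) + 1))).Finite := by
    intro j
    have hinj2 : Function.Injective fun k : ℕ => j + n * ((k : ℤ) + 1) := by
      intro k₁ k₂ h
      have := haff j (by exact_mod_cast h : j + n * ((k₁:ℤ)+1) = j + n * ((k₂:ℤ)+1))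
      omega
    have h : (Function.mulSupport fun k : ℕ => v (j + n * ((k : ℤ) + 1))) =
        (fun k : ℕ => j + n * ((k : ℤ) + 1)) ⁻¹' Function.mulSupport v := rfl
    rw [h]; exact hvfin.preimage hinj2.injOn
  set w : ℤ → A := fun j => ∏ᶠ k : ℕ, v (j + n * ((k : ℤ) + 1)) with hw
  have hwC : ∀ j, w j ∈ C := fun j => finprod_mem_subgroup _ _ fun k => huC _
  have hsigz : ∀ j : ℤ, (∏ᶠ k : ℤ, v (j + n * k)) = 1 := by
    intro j
    have h1 : sig (b₀ ^ n) u (b₀ ^ j) = ∏ᶠ k : ℤ, v (j + n * k) := by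
      unfold sig
      refine finprod_congr fun k => ?_
      rw [hv]
      congr 1
      rw [← zpow_mul, ← zpow_add]
    rw [← h1]; exact hsig _
  have hpeel : ∀ j : ℤ, w (j - n) = v j * w j := by
    intro j
    have hfin : (Function.mulSupport fun k : ℕ => v (j + n * (k : ℤ))).Finite := by
      have h : (Function.mulSupport fun k : ℕ => v (j + n * (k : ℤ))) ⊆
          Nat.cast ⁻¹' ((fun k : ℤ => j + n * k) ⁻¹' Function.mulSupport v) := fun k hk => hk
      exact (Set.Finite.preimage (Nat.cast_injective.injOn) ((hkfinZ j))).subset h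
    have h1 : w (j - n) = ∏ᶠ k : ℕ, v (j + n * (k : ℤ)) := by
      rw [hw]
      exact finprod_congr fun k => congrArg v (by ring)
    have h2 := finprod_nat_peel (fun k : ℕ => v (j + n * (k : ℤ))) hfin
    have h3 : v (j + n * ((0 : ℕ) : ℤ)) = v j := congrArg v (by push_cast; ring)
    have h4 : (∏ᶠ k : ℕ, v (j + n * ((k + 1 : ℕ) : ℤ))) = w j :=
      finprod_congr fun k => congrArg v (by push_cast; ring)
    rw [h1, h2]
    exact congrArg₂ (· * ·) h3 h4
  have htail : ∀ j : ℤ, (∀ k : ℤ, k ≤ 0 → v (j + n * k) = 1) → w j = 1 := by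
    intro j hj
    have hinj3 : Function.Injective fun m : ℕ => (m : ℤ) + 1 := by
      intro a b hab
      have : (a : ℤ) + 1 = (b : ℤ) + 1 := hab
      omega
    have hsupp : Function.mulSupport (fun k : ℤ => v (j + n * k)) ⊆
        Set.range (fun m : ℕ => (m : ℤ) + 1) := by
      intro k hk
      have hk1 : v (j + n * k) ≠ 1 := hk
      have : ¬ k ≤ 0 := fun hle => hk1 (hj k hle)
      refine ⟨(k - 1).toNat, ?_⟩
      show ((k - 1).toNat : ℤ) + 1 = k
      omega
    have h2 : w j = ∏ᶠ k ∈ Set.range (fun m : ℕ => (m : ℤ) + 1), v (j + n * k) :=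
      (finprod_mem_range (f := fun k : ℤ => v (j + n * k))
        (g := fun m : ℕ => (m : ℤ) + 1) hinj3).symm
    rw [h2, finprod_mem_of_mulSupport_subset' _ hsupp]
    exact hsigz j
  have hwfin : (Function.mulSupport w).Finite := by
    rcases Set.eq_empty_or_nonempty (Function.mulSupport v) with hve | hvne
    · have : ∀ j, w j = 1 := by
        intro j
        rw [hw]
        refine finprod_eq_one_of_forall_eq_one fun k => ?_
        by_contra hne
        exact Set.eq_empty_iff_forall_notMem.mp hve _ hne
      have : Function.mulSupport w = ∅ := by
        ext j; simp [this]
      rw [this]; exact Set.finite_empty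
    · set SF := hvfin.toFinset with hSF
      have hSFne : SF.Nonempty := by
        obtain ⟨s, hs⟩ := hvne
        exact ⟨s, by simp [hSF, hs]⟩
      set M₁ := SF.min' hSFne
      set M₂ := SF.max' hSFne
      have hsub : Function.mulSupport w ⊆ Set.Icc M₁ M₂ := by
        intro j hj
        have hj1 : w j ≠ 1 := hj
        have hex1 : ∃ k : ℕ, v (j + n * ((k : ℤ) + 1)) ≠ 1 := by
          by_contra hc
          push_neg at hc
          exact hj1 (finprod_eq_one_of_forall_eq_one hc)
        obtain ⟨k₁, hk₁⟩ := hex1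
        have hex2 : ∃ k : ℤ, k ≤ 0 ∧ v (j + n * k) ≠ 1 := by
          by_contra hc
          push_neg at hc
          exact hj1 (htail j hc)
        obtain ⟨k₂, hk₂le, hk₂⟩ := hex2
        have hs₁ : j + n * ((k₁ : ℤ) + 1) ∈ SF := by simp [hSF]; exact hk₁
        have hs₂ : j + n * k₂ ∈ SF := by simp [hSF]; exact hk₂
        have hb₁ := SF.min'_le _ hs₁
        have hb₂ := SF.min'_le _ hs₂
        have hc₁ := SF.le_max' _ hs₁
        have hc₂ := SF.le_max' _ hs₂
        constructor
        · rcases lt_or_gt_of_ne hn with hneg | hpos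
          · nlinarith [hb₁, (by positivity : (0:ℤ) < (k₁:ℤ) + 1)]
          · nlinarith [hb₂]
        · rcases lt_or_gt_of_ne hn with hneg | hpos
          · nlinarith [hc₂]
          · nlinarith [hc₁, (by positivity : (0:ℤ) < (k₁:ℤ) + 1)]
      exact (Set.finite_Icc M₁ M₂).subset hsub
  set h : B → A := Function.extend (fun j : ℤ => b₀ ^ j) (fun j => (w j)⁻¹) 1 with hh
  have happ : ∀ j : ℤ, h (b₀ ^ j) = (w j)⁻¹ := fun j => hinj.extend_apply _ _ _
  have happ' : ∀ z : B, (¬ ∃ j : ℤ, b₀ ^ j = z) → h z = 1 := by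
    intro z hz
    rw [hh, Function.extend_apply' _ _ _ hz]
    rfl
  refine ⟨h, ?_, ?_, ?_, ?_⟩
  · have hsub : Function.mulSupport h ⊆ (fun j : ℤ => b₀ ^ j) '' Function.mulSupport w := by
      intro z hz
      have hz1 : h z ≠ 1 := hz
      by_cases hr : ∃ j : ℤ, b₀ ^ j = z
      · obtain ⟨j, rfl⟩ := hr
        refine ⟨j, ?_, rfl⟩
        intro hwj
        exact hz1 (by rw [happ j, hwj, inv_one])
      · exact absurd (happ' z hr) hz1
    exact (hwfin.image _).subset hsub
  · intro z
    by_cases hr : ∃ j : ℤ, b₀ ^ j = z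
    · obtain ⟨j, rfl⟩ := hr
      rw [happ j]
      exact inv_mem (hwC j)
    · rw [happ' z hr]; exact one_mem _
  · intro z hz
    refine happ' z fun ⟨j, hj⟩ => hz ?_
    exact hj ▸ Subgroup.zpow_mem _ (Subgroup.mem_zpowers b₀) j
  · intro z
    by_cases hr : ∃ j : ℤ, b₀ ^ j = z
    · obtain ⟨j, rfl⟩ := hr
      have hstep : (b₀ ^ n)⁻¹ * b₀ ^ j = b₀ ^ (j - n) := by
        rw [← zpow_neg, ← zpow_add]
        congr 1
        ring
      rw [hstep, happ j, happ (j - n)]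
      have := hpeel j
      rw [inv_inv]
      calc u (b₀ ^ j) = v j := rfl
        _ = (w j)⁻¹ * (v j * w j) := by
            rw [mul_comm (v j) (w j), ← mul_assoc, inv_mul_cancel, one_mul]
        _ = (w j)⁻¹ * w (j - n) := by rw [← this]
    · have hz : (b₀ ^ n)⁻¹ * z ∉ Set.range fun j : ℤ => b₀ ^ j := by
        rintro ⟨j, hj⟩
        refine hr ⟨n + j, ?_⟩
        have hj' : b₀ ^ j = (b₀ ^ n)⁻¹ * z := hj
        rw [zpow_add, hj']
        group
      have hu1 : u z = 1 := by
        by_contra hne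
        obtain ⟨j, hj⟩ := Subgroup.mem_zpowers_iff.mp (husupp z hne)
        exact hr ⟨j, hj⟩
      rw [hu1, happ' z hr, happ' _ (fun hc => hz hc), inv_one, mul_one]

end Sigma


section ConjFormulas

variable {A B : Type*} [Group A] [Group B]

lemma wr_mul_right' (x y : Wr A B) : (x * y).right = x.right * y.right := rfl

lemma wr_conj_right {A B : Type*} [Group A] [CommGroup B] (t x : Wr A B) :
    (t * x * t⁻¹).right = x.right := by
  show t.right * x.right * t.right⁻¹ = x.right
  rw [mul_comm t.right x.right, mul_assoc, mul_inv_cancel, mul_one]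

lemma wr_conj_left_apply {A B : Type*} [Group A] [CommGroup B] (t x : Wr A B) (z : B) :
    ((t * x * t⁻¹).left : B → A) z =
      (t.left : B → A) z * (x.left : B → A) (t.right⁻¹ * z) *
        ((t.left : B → A) (x.right⁻¹ * z))⁻¹ := by
  rw [wr_mul_left_apply, wr_mul_left_apply, wr_inv_left_apply]
  have harg : t.right⁻¹⁻¹ * ((t * x).right⁻¹ * z) = x.right⁻¹ * z := by
    rw [wr_mul_right', inv_inv, mul_inv_rev, mul_comm x.right⁻¹ t.right⁻¹,
      mul_assoc t.right⁻¹, mul_inv_cancel_left]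
  rw [harg]

end ConjFormulas

section Embedding

variable {A B : Type*} [CommGroup A] [CommGroup B]

theorem conj_embedded (C : Subgroup A) {b₀ : B} (hb₀ : ¬ IsOfFinOrder b₀)
    (x y : wrSubgroup C (Subgroup.zpowers b₀)) :
    IsConj x y ↔ IsConj (x : Wr A B) (y : Wr A B) := by
  constructor
  · intro h
    obtain ⟨c, hc⟩ := isConj_iff.mp h
    refine isConj_iff.mpr ⟨↑c, ?_⟩
    have := congrArg (fun g : wrSubgroup C (Subgroup.zpowers b₀) => (g : Wr A B)) hc
    simpa using this
  · intro h
    obtain ⟨t, ht⟩ := isConj_iff.mp h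
    obtain ⟨hxr, hxC, hxs⟩ := x.2
    obtain ⟨hyr, hyC, hys⟩ := y.2
    set f : B → A := ((x : Wr A B).left : B → A) with hfdef
    set g : B → A := ((y : Wr A B).left : B → A) with hgdef
    set b : B := (x : Wr A B).right with hbdef
    have hffin : (Function.mulSupport f).Finite := (x : Wr A B).left.2
    have hgfin : (Function.mulSupport g).Finite := (y : Wr A B).left.2
    have htfin : (Function.mulSupport ((t.left : B → A))).Finite := t.left.2
    have hright : (y : Wr A B).right = b := by rw [← ht, wr_conj_right]
    have hleft : ∀ z, g z =
        (t.left : B → A) z * f (t.right⁻¹ * z) * ((t.left : B → A) (b⁻¹ * z))⁻¹ := by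
      intro z
      rw [hgdef, ← ht, wr_conj_left_apply]
    -- case x.right = 1
    by_cases hb1 : b = 1
    · have hleft' : ∀ z, g z = f (t.right⁻¹ * z) := by
        intro z
        rw [hleft z, hb1]
        simp only [inv_one, one_mul]
        rw [mul_comm ((t.left : B → A) z) (f (t.right⁻¹ * z)), mul_assoc, mul_inv_cancel,
          mul_one]
      by_cases hfex : ∃ s, f s ≠ 1
      · obtain ⟨s, hs⟩ := hfex
        have hsZ : s ∈ Subgroup.zpowers b₀ := by
          by_contra hns
          exact hs (hxs s hns)
        have hgs : g (t.right * s) ≠ 1 := by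
          rw [hleft' (t.right * s), inv_mul_cancel_left]
          exact hs
        have htsZ : t.right * s ∈ Subgroup.zpowers b₀ := by
          by_contra hns
          exact hgs (hys _ hns)
        have htrZ : t.right ∈ Subgroup.zpowers b₀ := by
          have := mul_mem htsZ (inv_mem hsZ)
          simpa using this
        set t' : Wr A B := ⟨1, t.right⟩ with ht'
        have ht'M : t' ∈ wrSubgroup C (Subgroup.zpowers b₀) := by
          refine ⟨htrZ, fun z => ?_, fun z _ => rfl⟩
          show ((1 : base A B) : B → A) z ∈ C
          exact one_mem C
        refine isConj_iff.mpr ⟨⟨t', ht'M⟩, ?_⟩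
        apply Subtype.ext
        show t' * (x : Wr A B) * t'⁻¹ = (y : Wr A B)
        apply SemidirectProduct.ext
        · apply Subtype.ext
          funext z
          rw [wr_conj_left_apply]
          show (1 : A) * f (t.right⁻¹ * z) * (1 : A)⁻¹ = g z
          rw [hleft' z]
          simp
        · rw [wr_conj_right, hright]
      · push_neg at hfex
        have hxy : (x : Wr A B) = (y : Wr A B) := by
          apply SemidirectProduct.ext
          · apply Subtype.ext
            funext z
            show f z = g z
            rw [hleft' z, hfex z, hfex _]
          · rw [hright]
        have : x = y := Subtype.ext hxy
        rw [this]
    -- case x.right ≠ 1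
    · obtain ⟨n, hn⟩ := Subgroup.mem_zpowers_iff.mp hxr
      have hn0 : n ≠ 0 := by
        rintro rfl
        rw [zpow_zero] at hn
        exact hb1 hn.symm
      have hbord : ¬ IsOfFinOrder b := by
        intro hford
        obtain ⟨m, hm, hbm⟩ := hford.exists_pow_eq_one
        have h1 : b₀ ^ (n * (m : ℤ)) = 1 := by
          rw [zpow_mul, hn, zpow_natCast, hbm]
        have h2 : b₀ ^ (n * (m : ℤ)) = b₀ ^ (0 : ℤ) := by rw [h1, zpow_zero]
        have := injective_zpow_iff_not_isOfFinOrder.mpr hb₀ h2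
        have : n * (m : ℤ) = 0 := this
        rcases mul_eq_zero.mp this with h | h
        · exact hn0 h
        · omega
      have hbZ : b ∈ Subgroup.zpowers b₀ := hxr
      have hfsfin : (Function.mulSupport fun w => f (t.right⁻¹ * w)).Finite := by
        have heq : (Function.mulSupport fun w => f (t.right⁻¹ * w)) =
            (fun w => t.right⁻¹ * w) ⁻¹' Function.mulSupport f := rfl
        rw [heq]
        exact hffin.preimage (mul_right_injective _).injOn
      have hcofin : (Function.mulSupport fun w =>
          (t.left : B → A) w * ((t.left : B → A) (b⁻¹ * w))⁻¹).Finite := by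
        have h2 : (Function.mulSupport fun w => ((t.left : B → A) (b⁻¹ * w))⁻¹).Finite := by
          have heq : (Function.mulSupport fun w => ((t.left : B → A) (b⁻¹ * w))⁻¹) =
              (fun w => b⁻¹ * w) ⁻¹' Function.mulSupport ((t.left : B → A)) := by
            ext w; simp [Function.mulSupport]
          rw [heq]
          exact htfin.preimage (mul_right_injective _).injOn
        exact (htfin.union h2).subset (Function.mulSupport_mul _ _)
      have hsig_match : ∀ z, sig b g z = sig b f (t.right⁻¹ * z) := by
        intro z
        have hgfun : g = fun w => (f (t.right⁻¹ * w)) *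
            ((t.left : B → A) w * ((t.left : B → A) (b⁻¹ * w))⁻¹) := by
          funext w
          rw [hleft w, mul_comm ((t.left : B → A) w) (f (t.right⁻¹ * w)), mul_assoc]
        rw [hgfun, sig_mul hbord hfsfin hcofin, sig_coboundary hbord htfin, mul_one,
          sig_shift]
      have hkey : ∃ c' ∈ Subgroup.zpowers b₀, ∀ z, sig b g z = sig b f (c'⁻¹ * z) := by
        by_cases hex : ∃ z, sig b g z ≠ 1
        · obtain ⟨z0, hz0⟩ := hex
          have hz0Z : z0 ∈ Subgroup.zpowers b₀ := by
            obtain ⟨k, hk⟩ := sig_ne_one_exists hz0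
            have h1 : z0 * b ^ k ∈ Subgroup.zpowers b₀ := by
              by_contra hns
              exact hk (hys _ hns)
            have := mul_mem h1 (inv_mem (Subgroup.zpow_mem _ hbZ k))
            simpa using this
          have hz0f : sig b f (t.right⁻¹ * z0) ≠ 1 := by
            rw [← hsig_match z0]
            exact hz0
          have hw0Z : t.right⁻¹ * z0 ∈ Subgroup.zpowers b₀ := by
            obtain ⟨k, hk⟩ := sig_ne_one_exists hz0f
            have h1 : t.right⁻¹ * z0 * b ^ k ∈ Subgroup.zpowers b₀ := by
              by_contra hns
              exact hk (hxs _ hns)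
            have := mul_mem h1 (inv_mem (Subgroup.zpow_mem _ hbZ k))
            simpa using this
          have htrZ : t.right ∈ Subgroup.zpowers b₀ := by
            have := mul_mem hz0Z (inv_mem hw0Z)
            have heq : z0 * (t.right⁻¹ * z0)⁻¹ = t.right := by group
            rwa [heq] at this
          exact ⟨t.right, htrZ, hsig_match⟩
        · push_neg at hex
          have hallf : ∀ w, sig b f w = 1 := by
            intro w
            have := hsig_match (t.right * w)
            rw [hex (t.right * w), inv_mul_cancel_left] at this
            exact this.symm
          exact ⟨1, one_mem _, fun z => by rw [hex z, hallf]⟩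
      obtain ⟨c', hc'Z, hmatch⟩ := hkey
      set u : B → A := fun z => g z * (f (c'⁻¹ * z))⁻¹ with hu
      have hcsfin : (Function.mulSupport fun w => f (c'⁻¹ * w)).Finite := by
        have heq : (Function.mulSupport fun w => f (c'⁻¹ * w)) =
            (fun w => c'⁻¹ * w) ⁻¹' Function.mulSupport f := rfl
        rw [heq]
        exact hffin.preimage (mul_right_injective _).injOn
      have hcsfin' : (Function.mulSupport fun w => (f (c'⁻¹ * w))⁻¹).Finite := by
        have heq : (Function.mulSupport fun w => (f (c'⁻¹ * w))⁻¹) =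
            Function.mulSupport fun w => f (c'⁻¹ * w) := by
          ext w; simp [Function.mulSupport]
        rw [heq]; exact hcsfin
      have hufin : (Function.mulSupport u).Finite :=
        (hgfin.union hcsfin').subset (Function.mulSupport_mul _ _)
      have huC : ∀ z, u z ∈ C := fun z => mul_mem (hyC z) (inv_mem (hxC _))
      have husupp : ∀ z, u z ≠ 1 → z ∈ Subgroup.zpowers b₀ := by
        intro z hz
        by_contra hns
        apply hz
        have h1 : g z = 1 := hys z hns
        have h2 : f (c'⁻¹ * z) = 1 := by
          apply hxs
          intro hmem
          exact hns (by simpa using mul_mem hc'Z hmem)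
        show g z * (f (c'⁻¹ * z))⁻¹ = 1
        rw [h1, h2]
        simp
      have husig : ∀ z, sig b u z = 1 := by
        intro z
        have hueq : u = fun z => g z * ((fun w => f (c'⁻¹ * w)) z)⁻¹ := rfl
        rw [hueq, sig_mul hbord hgfin hcsfin', sig_inv, sig_shift, ← hmatch z,
          mul_inv_cancel]
      have husig' : ∀ z, sig (b₀ ^ n) u z = 1 := by
        intro z
        rw [hn]
        exact husig z
      obtain ⟨h', hh'fin, hh'C, hh'supp, hh'cob⟩ :=
        exists_coboundary hb₀ hn0 hufin huC husupp husig'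
      have hh'cob' : ∀ z, u z = h' z * (h' (b⁻¹ * z))⁻¹ := by
        intro z
        have := hh'cob z
        rwa [hn] at this
      set t' : Wr A B := ⟨⟨h', hh'fin⟩, c'⟩ with ht'
      have ht'M : t' ∈ wrSubgroup C (Subgroup.zpowers b₀) := ⟨hc'Z, hh'C, hh'supp⟩
      refine isConj_iff.mpr ⟨⟨t', ht'M⟩, ?_⟩
      apply Subtype.ext
      show t' * (x : Wr A B) * t'⁻¹ = (y : Wr A B)
      apply SemidirectProduct.ext
      · apply Subtype.ext
        funext z
        rw [wr_conj_left_apply]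
        show h' z * f (c'⁻¹ * z) * (h' (b⁻¹ * z))⁻¹ = g z
        have hz := hh'cob' z
        calc h' z * f (c'⁻¹ * z) * (h' (b⁻¹ * z))⁻¹
            = (h' z * (h' (b⁻¹ * z))⁻¹) * f (c'⁻¹ * z) := by
              rw [mul_right_comm]
          _ = u z * f (c'⁻¹ * z) := by rw [← hz]
          _ = g z := by
              rw [hu]
              simp [mul_assoc]
      · rw [wr_conj_right, hright]

end Embedding


section WrHomSec

variable {A B A' B' : Type*} [Group A] [Group B] [Group A'] [Group B']

noncomputable def extFun (iA : A' →* A) (iB : B' → B) (f : B' → A') : B → A :=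
  Function.extend iB (fun x => iA (f x)) 1

lemma extFun_apply (iA : A' →* A) {iB : B' → B} (hiB : Function.Injective iB) (f : B' → A')
    (x : B') : extFun iA iB f (iB x) = iA (f x) := hiB.extend_apply _ _ _

lemma extFun_nmem (iA : A' →* A) (iB : B' → B) (f : B' → A') {z : B}
    (hz : ¬ ∃ x, iB x = z) : extFun iA iB f z = 1 := by
  rw [extFun, Function.extend_apply' _ _ _ hz]
  rfl

lemma extFun_fin (iA : A' →* A) {iB : B' → B} (hiB : Function.Injective iB) (f : base A' B') :
    (Function.mulSupport (extFun iA iB (f : B' → A'))).Finite := by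
  refine (f.2.image iB).subset ?_
  intro z hz
  by_cases hr : ∃ x, iB x = z
  · obtain ⟨x, rfl⟩ := hr
    rw [Function.mem_mulSupport, extFun_apply iA hiB] at hz
    refine ⟨x, ?_, rfl⟩
    intro hfx
    exact hz (by rw [hfx, map_one])
  · exact absurd (extFun_nmem iA iB _ hr) hz

noncomputable def wrHomFun (iA : A' →* A) (iB : B' →* B) (hiB : Function.Injective iB) (x : Wr A' B') :
    Wr A B := ⟨⟨extFun iA iB (x.left : B' → A'), extFun_fin iA hiB x.left⟩, iB x.right⟩

noncomputable def wrHom (iA : A' →* A) (iB : B' →* B) (hiB : Function.Injective iB) : Wr A' B' →* Wr A B :=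
  MonoidHom.mk' (wrHomFun iA iB hiB) (by
    intro x y
    apply SemidirectProduct.ext
    · apply Subtype.ext
      funext z
      have hR : ((wrHomFun iA iB hiB x * wrHomFun iA iB hiB y).left : B → A) z =
          extFun iA iB (x.left : B' → A') z *
            extFun iA iB (y.left : B' → A') ((iB x.right)⁻¹ * z) := rfl
      have hL : ((wrHomFun iA iB hiB (x * y)).left : B → A) z =
          extFun iA iB ((x * y).left : B' → A') z := rfl
      rw [hL, hR]
      by_cases hr : ∃ w, iB w = z
      · obtain ⟨w, rfl⟩ := hr
        have h1 : (iB x.right)⁻¹ * iB w = iB (x.right⁻¹ * w) := by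
          rw [map_mul, map_inv]
        rw [h1, extFun_apply iA hiB, extFun_apply iA hiB, extFun_apply iA hiB]
        have h2 : ((x * y).left : B' → A') w =
            (x.left : B' → A') w * (y.left : B' → A') (x.right⁻¹ * w) :=
          wr_mul_left_apply x y w
        rw [h2, map_mul]
      · have hr2 : ¬ ∃ w, iB w = (iB x.right)⁻¹ * z := by
          rintro ⟨w, hw⟩
          refine hr ⟨x.right * w, ?_⟩
          rw [map_mul, hw]
          group
        rw [extFun_nmem iA iB _ hr, extFun_nmem iA iB _ hr, extFun_nmem iA iB _ hr2, one_mul]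
    · show iB (x.right * y.right) = iB x.right * iB y.right
      rw [map_mul])

lemma wrHom_injective {iA : A' →* A} {iB : B' →* B} (hiA : Function.Injective iA)
    (hiB : Function.Injective iB) : Function.Injective (wrHom iA iB hiB) := by
  intro x y h
  have hr : iB x.right = iB y.right := congrArg SemidirectProduct.right h
  have hl := congrArg (fun g : Wr A B => (g.left : B → A)) h
  apply SemidirectProduct.ext
  · apply Subtype.ext
    funext w
    have h2 := congrFun hl (iB w)
    have h3 : extFun iA iB (x.left : B' → A') (iB w) =
        extFun iA iB (y.left : B' → A') (iB w) := h2
    rw [extFun_apply iA hiB, extFun_apply iA hiB] at h3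
    exact hiA h3
  · exact hiB hr

end WrHomSec

section ChiBeta

lemma exists_chi {A : Type*} [CommGroup A] {p : ℕ} (hp : p.Prime) {c : A}
    (hc : orderOf c = p) :
    ∃ χ : Multiplicative (ZMod p) →* A, Function.Injective χ ∧
      χ.range = Subgroup.zpowers c := by
  haveI : NeZero p := ⟨hp.pos.ne'⟩
  haveI : Fact (1 < p) := ⟨hp.one_lt⟩
  refine ⟨MonoidHom.mk' (fun k => c ^ (k.toAdd).val) ?_, ?_, ?_⟩
  · intro k l
    show c ^ ((k.toAdd + l.toAdd).val) = c ^ (k.toAdd).val * c ^ (l.toAdd).val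
    rw [ZMod.val_add, ← pow_add]
    conv_rhs => rw [← pow_mod_orderOf]
    rw [hc]
  · intro k l h
    have h' : c ^ (k.toAdd).val = c ^ (l.toAdd).val := h
    rw [pow_eq_pow_iff_modEq, hc] at h'
    have hk := ZMod.val_lt k.toAdd
    have hl := ZMod.val_lt l.toAdd
    have h2 : (k.toAdd).val = (l.toAdd).val := by
      unfold Nat.ModEq at h'
      rwa [Nat.mod_eq_of_lt hk, Nat.mod_eq_of_lt hl] at h'
    have h3 : k.toAdd = l.toAdd := by
      have h4 := congrArg (Nat.cast : ℕ → ZMod p) h2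
      rwa [ZMod.natCast_val, ZMod.natCast_val, ZMod.cast_id, ZMod.cast_id] at h4
    exact Multiplicative.toAdd.injective h3
  · apply le_antisymm
    · rintro _ ⟨k, rfl⟩
      exact Subgroup.mem_zpowers_iff.mpr ⟨((k.toAdd).val : ℤ), by rw [zpow_natCast]; rfl⟩
    · rw [Subgroup.zpowers_le]
      refine ⟨Multiplicative.ofAdd 1, ?_⟩
      show c ^ ((Multiplicative.ofAdd (1 : ZMod p)).toAdd).val = c
      rw [toAdd_ofAdd, ZMod.val_one]
      exact pow_one c

lemma exists_wr_iso {A B : Type*} [CommGroup A] [CommGroup B] {p : ℕ} (hp : p.Prime)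
    {c : A} (hc : orderOf c = p) {b₀ : B} (hb₀ : ¬ IsOfFinOrder b₀) :
    Nonempty (wrSubgroup (Subgroup.zpowers c) (Subgroup.zpowers b₀) ≃*
      Wr (Multiplicative (ZMod p)) (Multiplicative ℤ)) := by
  classical
  obtain ⟨χ, hχinj, hχrange⟩ := exists_chi hp hc
  set β : Multiplicative ℤ →* B := zpowersHom B b₀ with hβ
  have hβinj : Function.Injective β := by
    intro k l h
    have h' : b₀ ^ (k.toAdd) = b₀ ^ (l.toAdd) := h
    exact Multiplicative.toAdd.injective (injective_zpow_iff_not_isOfFinOrder.mpr hb₀ h')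
  set Ψ := wrHom χ β hβinj with hΨ
  have hΨinj : Function.Injective Ψ := wrHom_injective hχinj hβinj
  have hzr : ∀ z : B, z ∈ Subgroup.zpowers b₀ ↔ ∃ k : Multiplicative ℤ, β k = z := by
    intro z
    constructor
    · intro hz
      obtain ⟨j, hj⟩ := Subgroup.mem_zpowers_iff.mp hz
      exact ⟨Multiplicative.ofAdd j, hj⟩
    · rintro ⟨k, rfl⟩
      exact Subgroup.mem_zpowers_iff.mpr ⟨k.toAdd, rfl⟩
  have hrange : Ψ.range = wrSubgroup (Subgroup.zpowers c) (Subgroup.zpowers b₀) := by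
    ext x
    constructor
    · rintro ⟨w, rfl⟩
      refine ⟨(hzr _).mpr ⟨w.right, rfl⟩, ?_, ?_⟩
      · intro z
        show extFun χ β (w.left : Multiplicative ℤ → Multiplicative (ZMod p)) z ∈
          Subgroup.zpowers c
        by_cases hr : ∃ v, β v = z
        · obtain ⟨v, rfl⟩ := hr
          rw [extFun_apply χ hβinj]
          rw [← hχrange]
          exact ⟨_, rfl⟩
        · rw [extFun_nmem χ β _ hr]
          exact one_mem _
      · intro z hz
        exact extFun_nmem χ β _ (fun hr => hz ((hzr z).mpr hr))
    · intro hx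
      obtain ⟨hxr, hxC, hxs⟩ := hx
      obtain ⟨j, hj⟩ := Subgroup.mem_zpowers_iff.mp hxr
      set χ' := MonoidHom.ofInjective hχinj with hχ'
      have hmem : ∀ k : Multiplicative ℤ, (x.left : B → A) (β k) ∈ χ.range := by
        intro k
        rw [hχrange]
        exact hxC _
      set F : Multiplicative ℤ → Multiplicative (ZMod p) :=
        fun k => χ'.symm ⟨(x.left : B → A) (β k), hmem k⟩ with hF
      have hχ'coe : ∀ q : χ.range, χ (χ'.symm q) = (q : A) :=
        fun q => MonoidHom.apply_ofInjective_symm hχinj q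
      have hFfin : (Function.mulSupport F).Finite := by
        refine (x.left.2.preimage hβinj.injOn).subset ?_
        intro k hk
        show (x.left : B → A) (β k) ≠ 1
        intro hzero
        apply hk
        show F k = 1
        have h8 : (⟨(x.left : B → A) (β k), hmem k⟩ : χ.range) = 1 := Subtype.ext hzero
        have h7 : F k = χ'.symm 1 := congrArg (fun q : χ.range => χ'.symm q) h8
        rw [h7, map_one]
      refine ⟨⟨⟨F, hFfin⟩, Multiplicative.ofAdd j⟩, ?_⟩
      apply SemidirectProduct.ext
      · apply Subtype.ext
        funext z
        show extFun χ β F z = (x.left : B → A) z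
        by_cases hr : ∃ k, β k = z
        · obtain ⟨k, rfl⟩ := hr
          rw [extFun_apply χ hβinj]
          exact hχ'coe _
        · rw [extFun_nmem χ β _ hr]
          exact (hxs z (fun hz => hr ((hzr z).mp hz))).symm
      · show β (Multiplicative.ofAdd j) = x.right
        exact hj
  exact ⟨((MonoidHom.ofInjective hΨinj).trans (MulEquiv.subgroupCongr hrange)).symm⟩

end ChiBeta


section Depth

variable {G L : Type*} [Group G] [Group L]

lemma ball_mono {S : Set G} {n m : ℕ} (h : n ≤ m) : ball G S n ⊆ ball G S m := by
  rintro g ⟨w, hw, hlen, rfl⟩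
  exact ⟨w, hw, hlen.trans h, rfl⟩

lemma exists_word_of_mem_closure {S : Set G} {g : G} (hg : g ∈ Subgroup.closure S) :
    ∃ w : List G, (∀ x ∈ w, x ∈ S ∪ S⁻¹) ∧ w.prod = g := by
  refine Subgroup.closure_induction ?_ ?_ ?_ ?_ hg
  · intro x hx
    exact ⟨[x], by simp [hx], by simp⟩
  · exact ⟨[], by simp, by simp⟩
  · rintro x y _ _ ⟨wx, hwx, rfl⟩ ⟨wy, hwy, rfl⟩
    refine ⟨wx ++ wy, ?_, by simp⟩
    intro z hz
    rcases List.mem_append.mp hz with h | h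
    exacts [hwx z h, hwy z h]
  · rintro x _ ⟨w, hw, rfl⟩
    refine ⟨(w.map Inv.inv).reverse, ?_, ?_⟩
    · intro z hz
      simp only [List.mem_reverse, List.mem_map] at hz
      obtain ⟨u, hu, rfl⟩ := hz
      rcases hw u hu with h | h
      · exact Or.inr (by simpa using h)
      · exact Or.inl (by simpa using h)
    · rw [← List.prod_inv_reverse]

lemma list_prod_mem_ball {S : Set G} {Cb : ℕ} {w : List G}
    (hw : ∀ x ∈ w, x ∈ ball G S Cb) : w.prod ∈ ball G S (Cb * w.length) := by
  induction w with
  | nil => exact ⟨[], by simp, by simp, by simp⟩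
  | cons x t ih =>
      obtain ⟨wx, hwx, hwxlen, hwxprod⟩ := hw x List.mem_cons_self
      obtain ⟨wt, hwt, hwtlen, hwtprod⟩ := ih fun z hz => hw z (List.mem_cons_of_mem x hz)
      refine ⟨wx ++ wt, ?_, ?_, ?_⟩
      · intro z hz
        rcases List.mem_append.mp hz with h | h
        exacts [hwx z h, hwt z h]
      · simp only [List.length_append, List.length_cons]
        calc wx.length + wt.length ≤ Cb + Cb * t.length := Nat.add_le_add hwxlen hwtlen
          _ = Cb * (t.length + 1) := by ring
      · simp [hwxprod, hwtprod]

lemma isConj_map {M N : Type*} [Group M] [Group N] (f : M →* N) {x y : M}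
    (h : IsConj x y) : IsConj (f x) (f y) := by
  obtain ⟨cc, hcc⟩ := isConj_iff.mp h
  exact isConj_iff.mpr ⟨f cc, by rw [← map_inv, ← map_mul, ← map_mul, hcc]⟩

lemma isConj_equiv_iff (e : L ≃* G) (x y : L) : IsConj (e x) (e y) ↔ IsConj x y := by
  constructor
  · intro h
    have := isConj_map e.symm.toMonoidHom h
    simpa using this
  · intro h
    exact isConj_map e.toMonoidHom h

lemma CD_le_of_equiv (e : L ≃* G) (x y : L) : CD G (e x) (e y) ≤ CD L x y := by
  apply sInf_le_sInf
  rintro cc ⟨Q, iQ, fQ, π, hsurj, hnc, rfl⟩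
  exact ⟨Q, iQ, fQ, π.comp e.symm.toMonoidHom, hsurj.comp e.symm.surjective,
    by simpa using hnc, rfl⟩

lemma CD_le_subgroup (H : Subgroup G) (x y : H) :
    CD H x y ≤ CD G (x : G) (y : G) := by
  refine le_sInf ?_
  rintro cc ⟨Q, iQ, fQ, π, hsurj, hnc, rfl⟩
  set π' : H →* Q := π.comp H.subtype with hπ'
  have h1 : CD (↥H) x y ≤ (Nat.card π'.range : ℕ∞) := by
    refine sInf_le ⟨π'.range, inferInstance, inferInstance, π'.rangeRestrict,
      MonoidHom.rangeRestrict_surjective π', ?_, rfl⟩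
    intro hconj
    obtain ⟨q, hq⟩ := isConj_iff.mp hconj
    apply hnc
    refine isConj_iff.mpr ⟨(q : Q), ?_⟩
    have h2 := congrArg (Subtype.val : π'.range → Q) hq
    simpa [hπ'] using h2
  refine h1.trans ?_
  exact_mod_cast Nat.card_le_card_of_injective _ Subtype.val_injective

lemma preceq_of_subgroup_embed (H : Subgroup G) (e : L ≃* H)
    (hce : ∀ x y : H, IsConj x y ↔ IsConj (x : G) (y : G)) :
    ∀ S₁ : Set L, GeneratingSet S₁ → ∀ S₂ : Set G, GeneratingSet S₂ →
      Preceq (conjDepthFn L S₁) (conjDepthFn G S₂) := by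
  classical
  intro S₁ hS₁ S₂ hS₂
  set ψ : L →* G := H.subtype.comp e.toMonoidHom with hψ
  have hfin : ((S₁ ∪ S₁⁻¹) : Set L).Finite := hS₁.1.union hS₁.1.inv
  have hmem : ∀ t : L, ∃ n : ℕ, ψ t ∈ ball G S₂ n := by
    intro t
    have hcl : ψ t ∈ Subgroup.closure S₂ := by
      rw [hS₂.2]
      trivial
    obtain ⟨w, hw, hprod⟩ := exists_word_of_mem_closure hcl
    exact ⟨w.length, w, hw, le_rfl, hprod⟩
  choose nb hnb using hmem
  set Cb : ℕ := hfin.toFinset.sup nb with hCb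
  have hballs : ∀ t ∈ S₁ ∪ S₁⁻¹, ψ t ∈ ball G S₂ Cb := by
    intro t ht
    have h1 : nb t ≤ Cb := Finset.le_sup (hfin.mem_toFinset.mpr ht)
    exact ball_mono h1 (hnb t)
  refine ⟨Cb + 1, ?_⟩
  intro k
  have hψball : ∀ x ∈ ball L S₁ k, ψ x ∈ ball G S₂ ((Cb + 1) * k) := by
    rintro x ⟨w, hw, hlen, rfl⟩
    have h1 : ψ w.prod = (w.map ψ).prod := (List.prod_hom w ψ).symm
    rw [h1]
    have h2 : (w.map ψ).prod ∈ ball G S₂ ((Cb + 1) * (w.map ψ).length) := by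
      apply list_prod_mem_ball
      intro z hz
      obtain ⟨u, hu, rfl⟩ := List.mem_map.mp hz
      exact ball_mono (Nat.le_succ Cb) (hballs u (hw u hu))
    refine ball_mono ?_ h2
    rw [List.length_map]
    exact Nat.mul_le_mul_left _ hlen
  have hmain : conjDepthFn L S₁ k ≤ conjDepthFn G S₂ ((Cb + 1) * k) := by
    refine iSup_le fun x => iSup_le fun hx => iSup_le fun y => iSup_le fun hy =>
      iSup_le fun hnc => ?_
    have hncH : ¬ IsConj (e x) (e y) := fun hc => hnc ((isConj_equiv_iff e x y).mp hc)
    have hncG : ¬ IsConj (ψ x) (ψ y) := fun hc => hncH ((hce (e x) (e y)).mpr hc)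
    have h0 : CD L x y ≤ CD (↥H) (e x) (e y) := by
      have := CD_le_of_equiv e.symm (e x) (e y)
      simpa using this
    refine h0.trans ((CD_le_subgroup H (e x) (e y)).trans ?_)
    exact le_iSup_of_le (ψ x) (le_iSup_of_le (hψball x hx) (le_iSup_of_le (ψ y)
      (le_iSup_of_le (hψball y hy) (le_iSup_of_le hncG le_rfl))))
  refine hmain.trans ?_
  refine le_mul_of_one_le_left' ?_
  exact_mod_cast Nat.succ_le_succ (Nat.zero_le Cb)

end Depth


section Retracts
open scoped DirectSum

lemma isRetract_of_fix {G : Type*} [Group G] (ρ : G →* G) (a : G)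
    (h1 : ∀ x, ρ x ∈ Subgroup.zpowers a) (h2 : ρ a = a) :
    IsRetractSubgroup (Subgroup.zpowers a) := by
  refine ⟨ρ, h1, ?_⟩
  rintro h hh
  obtain ⟨k, rfl⟩ := Subgroup.mem_zpowers_iff.mp hh
  rw [map_zpow, h2]

lemma exists_cyclic_retract (A : Type*) [CommGroup A] [Finite A] (p : ℕ) (hp : p.Prime)
    (hdvd : p ∣ Nat.card A) :
    ∃ a : A, p ∣ orderOf a ∧ orderOf a ≠ 0 ∧ IsRetractSubgroup (Subgroup.zpowers a) := by
  classical
  obtain ⟨ι, hι, m, hm, ⟨e⟩⟩ := CommGroup.equiv_prod_multiplicative_zmod_of_finite A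
  have hcard : Nat.card A = ∏ i, m i := by
    rw [Nat.card_congr e.toEquiv, Nat.card_pi]
    exact Finset.prod_congr rfl fun i _ => by
      rw [← Nat.card_congr (Multiplicative.ofAdd (α := ZMod (m i))), Nat.card_zmod]
  have : ∃ i : ι, p ∣ m i := by
    have := hdvd; rw [hcard] at this
    obtain ⟨i, _, hi⟩ := (hp.prime.dvd_finset_prod_iff m).mp this
    exact ⟨i, hi⟩
  obtain ⟨i, hpi⟩ := this
  set g : ∀ j, Multiplicative (ZMod (m j)) :=
    Pi.mulSingle i (Multiplicative.ofAdd (1 : ZMod (m i))) with hg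
  set a : A := e.symm g with ha
  have horder : orderOf a = m i := by
    rw [ha, MulEquiv.orderOf_eq, hg, orderOf_piMulSingle, orderOf_ofAdd_eq_addOrderOf,
      ZMod.addOrderOf_one]
  haveI : NeZero (m i) := ⟨by have := hm i; omega⟩
  refine ⟨a, horder ▸ hpi, horder ▸ (by have := hm i; omega), ?_⟩
  set ρ : A →* A :=
    (e.symm.toMonoidHom.comp ((MonoidHom.mulSingle _ i).comp (Pi.evalMonoidHom _ i))).comp
      e.toMonoidHom with hρ
  apply isRetract_of_fix ρ a
  · intro x
    set y : Multiplicative (ZMod (m i)) := e x i with hy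
    have hy2 : y = (Multiplicative.ofAdd (1 : ZMod (m i))) ^ (y.toAdd).val := by
      rw [← ofAdd_nsmul]
      simp [nsmul_eq_mul, ZMod.natCast_val, ZMod.cast_id]
    have hsingle : Pi.mulSingle i y = g ^ (y.toAdd).val := by
      conv_lhs => rw [hy2]
      rw [Pi.mulSingle_pow, hg]
    have : ρ x = a ^ (y.toAdd).val := by
      rw [hρ, ha]
      simp only [MonoidHom.comp_apply, MulEquiv.coe_toMonoidHom, Pi.evalMonoidHom_apply,
        MonoidHom.mulSingle_apply]
      rw [← hy, hsingle, map_pow]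
    rw [this, ← zpow_natCast]
    exact Subgroup.mem_zpowers_iff.mpr ⟨_, rfl⟩
  · rw [hρ]
    simp only [MonoidHom.comp_apply, MulEquiv.coe_toMonoidHom, ha, MulEquiv.apply_symm_apply,
      Pi.evalMonoidHom_apply, MonoidHom.mulSingle_apply]
    congr 1
    rw [hg]
    simp


lemma isRetract_of_additive {G : Type*} [CommGroup G] (φ : Additive G →+ Additive G) (a : G)
    (h1 : ∀ x : Additive G, ∃ k : ℤ, φ x = k • Additive.ofMul a)
    (h2 : φ (Additive.ofMul a) = Additive.ofMul a) :
    IsRetractSubgroup (Subgroup.zpowers a) := by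
  apply isRetract_of_fix (MonoidHom.toAdditive.symm φ) a
  · intro x
    obtain ⟨k, hk⟩ := h1 (Additive.ofMul x)
    refine Subgroup.mem_zpowers_iff.mpr ⟨k, ?_⟩
    show a ^ k = (φ (Additive.ofMul x)).toMul
    rw [hk, toMul_zsmul, toMul_ofMul]
  · show (φ (Additive.ofMul a)).toMul = a
    rw [h2, toMul_ofMul]

lemma exists_infinite_cyclic_retract (B : Type*) [CommGroup B] [Infinite B]
    (hBfg : Group.FG B) :
    ∃ b : B, ¬ IsOfFinOrder b ∧ IsRetractSubgroup (Subgroup.zpowers b) := by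
  classical
  haveI : AddGroup.FG (Additive B) := GroupFG.iff_add_fg.mp hBfg
  obtain ⟨n, ι, hι, q, hq, f, ⟨e⟩⟩ := AddCommGroup.equiv_free_prod_directSum_zmod (Additive B)
  haveI : ∀ i : ι, Finite (ZMod (q i ^ f i)) := fun i => by
    haveI : NeZero (q i ^ f i) := ⟨pow_ne_zero _ (hq i).pos.ne'⟩
    infer_instance
  haveI : Finite (⨁ i, ZMod (q i ^ f i)) :=
    Finite.of_equiv _ (DFinsupp.equivFunOnFintype).symm
  have hn : n ≠ 0 := by
    rintro rfl
    haveI : IsEmpty (Fin 0) := by infer_instance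
    haveI : Finite ((Fin 0 →₀ ℤ) × ⨁ i, ZMod (q i ^ f i)) := by infer_instance
    haveI : Finite (Additive B) := Finite.of_equiv _ e.symm.toEquiv
    haveI : Finite B := Finite.of_equiv _ (Additive.ofMul (α := B)).symm
    exact not_finite B
  set i0 : Fin n := ⟨0, Nat.pos_of_ne_zero hn⟩
  set α : Additive B := e.symm (Finsupp.single i0 1, 0) with hα
  set b : B := α.toMul with hb
  have hαb : Additive.ofMul b = α := rfl
  set π : (Fin n →₀ ℤ) × (⨁ i, ZMod (q i ^ f i)) →+ ℤ :=
    (Finsupp.applyAddHom i0).comp (AddMonoidHom.fst _ _) with hπ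
  set τ : ℤ →+ (Fin n →₀ ℤ) × (⨁ i, ZMod (q i ^ f i)) :=
    (AddMonoidHom.inl _ _).comp (Finsupp.singleAddHom i0) with hτ
  set φ : Additive B →+ Additive B :=
    (e.symm.toAddMonoidHom.comp (τ.comp (π.comp e.toAddMonoidHom))) with hφ
  have hτk : ∀ k : ℤ, τ k = k • (Finsupp.single i0 1, 0) := by
    intro k
    have : τ k = k • τ 1 := by rw [← map_zsmul]; norm_num
    rw [this]
    congr 1
  have hφx : ∀ x : Additive B, φ x = (π (e x)) • α := by
    intro x
    rw [hφ]
    simp only [AddMonoidHom.comp_apply, AddEquiv.coe_toAddMonoidHom]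
    rw [hτk, map_zsmul, hα]
  refine ⟨b, ?_, ?_⟩
  · intro hford
    obtain ⟨k, hkpos, hk⟩ := hford.exists_pow_eq_one
    have : (k : ℤ) • α = 0 := by
      rw [← hαb, natCast_zsmul, ← ofMul_pow, hk, ofMul_one]
    have h2 : e ((k : ℤ) • α) = 0 := by rw [this, map_zero]
    rw [map_zsmul, hα, AddEquiv.apply_symm_apply] at h2
    have h3 := congrArg (fun z => z.1 i0) h2
    simp [Finsupp.smul_single] at h3
    omega
  · apply isRetract_of_additive φ b
    · intro x
      exact ⟨π (e x), by rw [hφx, hαb]⟩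
    · rw [hαb, hφx, hα, AddEquiv.apply_symm_apply]
      show (π ((Finsupp.single i0 1, 0) : (Fin n →₀ ℤ) × (⨁ i, ZMod (q i ^ f i)))) • α = α
      rw [hπ]
      simp


end Retracts

/-- If `A` is a finite abelian group, `p` a prime dividing `|A|`,
and `B` an infinite finitely generated abelian group, then `A ≀ B` contains a
conjugacy embedded subgroup of the form `C ≀ Z₀` isomorphic to `(ℤ/pℤ) ≀ ℤ`,
where `C ≤ A` has order `p` and lies in a cyclic direct summand (retract) of `A`
and `Z₀ ≤ B` is an infinite cyclic retract of `B`; moreover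
`Conj_{(ℤ/pℤ) ≀ ℤ}(n) ≼ Conj_{A ≀ B}(n)`. -/
theorem lamplighter_conjugacy_embedded (A B : Type*) [CommGroup A] [Finite A]
    [CommGroup B] [Infinite B] (hBfg : Group.FG B)
    (p : ℕ) (hp : p.Prime) (hdvd : p ∣ Nat.card A) :
    ∃ (C : Subgroup A) (Z₀ : Subgroup B),
      Nat.card C = p ∧
      (∃ a : A, C ≤ Subgroup.zpowers a ∧ IsRetractSubgroup (Subgroup.zpowers a)) ∧
      (∃ b : B, ¬ IsOfFinOrder b ∧ Z₀ = Subgroup.zpowers b) ∧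
      IsRetractSubgroup Z₀ ∧
      Nonempty (wrSubgroup C Z₀ ≃* Wr (Multiplicative (ZMod p)) (Multiplicative ℤ)) ∧
      (∀ x y : wrSubgroup C Z₀, IsConj x y ↔ IsConj (x : Wr A B) (y : Wr A B)) ∧
      (∀ S₁ : Set (Wr (Multiplicative (ZMod p)) (Multiplicative ℤ)), GeneratingSet S₁ →
        ∀ S₂ : Set (Wr A B), GeneratingSet S₂ →
          Preceq (conjDepthFn (Wr (Multiplicative (ZMod p)) (Multiplicative ℤ)) S₁)
            (conjDepthFn (Wr A B) S₂)) := by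
  classical
  obtain ⟨a, hpa, hane, haret⟩ := exists_cyclic_retract A p hp hdvd
  set c : A := a ^ (orderOf a / p) with hcdef
  have hordc : orderOf c = p := by
    rw [hcdef, orderOf_pow]
    have hdp : orderOf a / p ∣ orderOf a := Nat.div_dvd_of_dvd hpa
    rw [Nat.gcd_eq_right hdp]
    exact Nat.div_div_self hpa hane
  obtain ⟨b₀, hb₀, hbret⟩ := exists_infinite_cyclic_retract B hBfg
  set C : Subgroup A := Subgroup.zpowers c with hC
  set Z₀ : Subgroup B := Subgroup.zpowers b₀ with hZ₀
  obtain ⟨iso⟩ := exists_wr_iso hp hordc hb₀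
  refine ⟨C, Z₀, ?_, ⟨a, ?_, haret⟩, ⟨b₀, hb₀, rfl⟩, hbret, ⟨iso⟩,
    fun x y => conj_embedded C hb₀ x y, ?_⟩
  · rw [hC, Nat.card_zpowers, hordc]
  · rw [hC, Subgroup.zpowers_le]
    exact Subgroup.mem_zpowers_iff.mpr ⟨((orderOf a / p : ℕ) : ℤ), by rw [zpow_natCast]⟩
  · intro S₁ hS₁ S₂ hS₂
    exact preceq_of_subgroup_embed (wrSubgroup C Z₀) iso.symm
      (fun x y => conj_embedded C hb₀ x y) S₁ hS₁ S₂ hS₂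

end WreathDepth
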